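/- Let ν be a monotone valuation over the items of an enumeration P = (v₁,…,v_m) with m ≥ 1. Then (a) there exists at least one index r such that v_r is a lumpy tie for ν, and (b) the set of indices r for which v_r is a lumpy tie is a set of consecutive integers: if v_r and v_s are lumpy ties with r < q < s, then v_q is also a lumpy tie. -/
import Mathlib


/-- The bundle `{v s, …, v t}` of items (empty if `s > t`). -/
def segF {V : Type} [DecidableEq V] (v : ℕ → V) (s t : ℕ) : Finset V :=
  (Finset.Icc s t).image v

/-- `v r` is a lumpy tie over the enumeration `v 1, …, v m` for the valuation `ν`:
`ν(L(v_r) ∪ {v_r}) ≥ ν(R(v_r))` and `ν(R(v_r) ∪ {v_r}) ≥ ν(L(v_r))`. -/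
def IsLumpyTie {V : Type} [DecidableEq V] (v : ℕ → V) (m : ℕ) (ν : Finset V → ℝ)
    (r : ℕ) : Prop :=
  ν (segF v 1 (r - 1) ∪ {v r}) ≥ ν (segF v (r + 1) m) ∧
  ν (segF v (r + 1) m ∪ {v r}) ≥ ν (segF v 1 (r - 1))

lemma segF_union_left {V : Type} [DecidableEq V] (v : ℕ → V) {r : ℕ} (hr : 1 ≤ r) :
    segF v 1 (r - 1) ∪ {v r} = segF v 1 r := by
  have h : ({v r} : Finset V) = Finset.image v {r} := by simp
  rw [segF, h, ← Finset.image_union]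
  congr 1
  ext x
  simp only [Finset.mem_union, Finset.mem_Icc, Finset.mem_singleton]
  omega

lemma segF_union_right {V : Type} [DecidableEq V] (v : ℕ → V) {r m : ℕ} (hr : r ≤ m) :
    segF v (r + 1) m ∪ {v r} = segF v r m := by
  have h : ({v r} : Finset V) = Finset.image v {r} := by simp
  rw [segF, h, ← Finset.image_union]
  congr 1
  ext x
  simp only [Finset.mem_union, Finset.mem_Icc, Finset.mem_singleton]
  omega

lemma segF_subset {V : Type} [DecidableEq V] (v : ℕ → V) {s t s' t' : ℕ}
    (hs : s' ≤ s) (ht : t ≤ t') : segF v s t ⊆ segF v s' t' :=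
  Finset.image_subset_image (Finset.Icc_subset_Icc hs ht)

/-- For a monotone valuation over an enumeration `v 1, …, v m` of `m ≥ 1` distinct items:
(a) a lumpy tie exists, and (b) the lumpy-tie indices are consecutive. -/
theorem stmt_12 {V : Type} [DecidableEq V] (m : ℕ) (hm : 1 ≤ m)
    (v : ℕ → V) (hv : Set.InjOn v (Set.Icc 1 m))
    (ν : Finset V → ℝ) (hν0 : ν ∅ = 0)
    (hmono : ∀ X Y : Finset V, X ⊆ Y → ν X ≤ ν Y) :
    (∃ r, 1 ≤ r ∧ r ≤ m ∧ IsLumpyTie v m ν r) ∧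
    (∀ r q s : ℕ, 1 ≤ r → r < q → q < s → s ≤ m →
      IsLumpyTie v m ν r → IsLumpyTie v m ν s → IsLumpyTie v m ν q) := by
  have hempty : segF v (m + 1) m = ∅ := by
    simp [segF, Finset.Icc_eq_empty_of_lt (Nat.lt_succ_self m)]
  constructor
  · -- existence: take the minimal r in [1,m] with ν(seg 1 r) ≥ ν(seg (r+1) m)
    have hex : ∃ r, 1 ≤ r ∧ r ≤ m ∧ ν (segF v 1 r) ≥ ν (segF v (r + 1) m) := by
      refine ⟨m, hm, le_refl m, ?_⟩
      rw [hempty, hν0]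
      have := hmono ∅ (segF v 1 m) (Finset.empty_subset _)
      rwa [hν0] at this
    classical
    set r := Nat.find hex with hrdef
    obtain ⟨hr1, hrm, hrcond⟩ := Nat.find_spec hex
    refine ⟨r, hr1, hrm, ?_⟩
    constructor
    · rw [segF_union_left v hr1]; exact hrcond
    · rw [segF_union_right v hrm]
      rcases Nat.eq_or_lt_of_le hr1 with h1 | h1
      · have : segF v 1 (r - 1) = ∅ := by
          have hz : r - 1 = 0 := by omega
          rw [hz]; simp [segF]
        rw [this, hν0]
        have := hmono ∅ (segF v r m) (Finset.empty_subset _)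
        rwa [hν0] at this
      · -- r ≥ 2, minimality at r - 1
        have hlt : r - 1 < r := by omega
        have hnot := Nat.find_min hex hlt
        push_neg at hnot
        have := hnot (by omega) (by omega)
        have he : r - 1 + 1 = r := by omega
        rw [he] at this
        exact le_of_lt this
  · intro r q s hr1 hrq hqs hsm hr hs
    have hq1 : 1 ≤ q := by omega
    have hqm : q ≤ m := by omega
    obtain ⟨hrA, _⟩ := hr
    obtain ⟨_, hsB⟩ := hs
    rw [segF_union_left v hr1] at hrA
    rw [segF_union_right v hsm] at hsB
    constructor
    · rw [segF_union_left v hq1]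
      calc ν (segF v (q + 1) m) ≤ ν (segF v (r + 1) m) :=
            hmono _ _ (segF_subset v (by omega) (le_refl m))
        _ ≤ ν (segF v 1 r) := hrA
        _ ≤ ν (segF v 1 q) := hmono _ _ (segF_subset v (le_refl 1) (by omega))
    · rw [segF_union_right v hqm]
      calc ν (segF v 1 (q - 1)) ≤ ν (segF v 1 (s - 1)) :=
            hmono _ _ (segF_subset v (le_refl 1) (by omega))
        _ ≤ ν (segF v s m) := hsB
        _ ≤ ν (segF v q m) := hmono _ _ (segF_subset v (by omega) (le_refl m))
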